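/- For the arithmetic progression a, a+d, …, a+sd with gcd(a,d) = 1, a ≥ 2, d ≥ 1 and 1 ≤ s < a, and every integer m ≥ 1, the Sylvester sum satisfies m·S_{m−1} = a^{m−1}·∑_{n=0}^{a−1} B_m(⌈n/s⌉ + nd/a) − B_m, where B_m(x) is the m-th Bernoulli polynomial, B_m = B_m(0), and ⌈·⌉ is the ceiling function. -/

import Mathlib

section SylAux
open Finset Polynomial

/-- ceiling of n/s over ℕ -/
def sylC (s n : ℕ) : ℕ := (n + s - 1) / s

/-- the Apéry element in the class of `n*d` mod `a` -/
def sylW (a d s n : ℕ) : ℕ := a * sylC s n + n * d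

lemma le_mul_sylC {s : ℕ} (hs : 0 < s) (n : ℕ) : n ≤ s * sylC s n := by
  have h1 := Nat.div_add_mod (n + s - 1) s
  have h2 : (n + s - 1) % s < s := Nat.mod_lt _ hs
  unfold sylC
  set A := s * ((n + s - 1) / s) with hA
  omega

lemma mul_sylC_le {s : ℕ} (hs : 0 < s) (n : ℕ) : s * sylC s n ≤ n + s - 1 := by
  unfold sylC
  rw [mul_comm]
  exact Nat.div_mul_le_self _ _

lemma sylC_le_of {s n X : ℕ} (hs : 0 < s) (h : n ≤ s * X) : sylC s n ≤ X := by
  have h2 : n + s - 1 < (X + 1) * s := by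
    have : (X + 1) * s = s * X + s := by ring
    omega
  unfold sylC
  exact Nat.lt_succ_iff.mp ((Nat.div_lt_iff_lt_mul hs).mpr h2)

/-- representability by the arithmetic progression, reduced form -/
def SylRep (a d s t : ℕ) : Prop := ∃ X Y : ℕ, Y ≤ s * X ∧ t = a * X + d * Y

lemma fin_sum_single (a d s c v : ℕ) (hc : c ≤ s) :
    ∑ i : Fin (s + 1), (a + (i : ℕ) * d) * (if (i : ℕ) = c then v else 0)
      = (a + c * d) * v := by
  rw [Fin.sum_univ_eq_sum_range (fun i => (a + i * d) * (if i = c then v else 0)) (s + 1)]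
  have h : ∀ i, (a + i * d) * (if i = c then v else 0)
      = if i = c then (a + i * d) * v else 0 := by
    intro i; split <;> simp
  rw [Finset.sum_congr rfl fun i _ => h i, Finset.sum_ite_eq' (range (s+1)) c
    (fun i => (a + i * d) * v)]
  simp [Nat.lt_succ_iff.mpr hc]

lemma syl_rep_iff (a d s t : ℕ) (hs : 1 ≤ s) :
    (∃ x : Fin (s + 1) → ℕ, t = ∑ i : Fin (s + 1), (a + (i : ℕ) * d) * x i) ↔
      SylRep a d s t := by
  constructor
  · rintro ⟨x, rfl⟩
    refine ⟨∑ i : Fin (s+1), x i, ∑ i : Fin (s+1), (i : ℕ) * x i, ?_, ?_⟩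
    · rw [Finset.mul_sum]
      refine Finset.sum_le_sum fun i _ => ?_
      exact Nat.mul_le_mul_right _ (Nat.lt_succ_iff.mp i.2)
    · rw [Finset.mul_sum, Finset.mul_sum, ← Finset.sum_add_distrib]
      refine Finset.sum_congr rfl fun i _ => by ring
  · rintro ⟨X, Y, hY, rfl⟩
    set q := Y / s with hq
    set r := Y % s with hr
    have hdm : s * q + r = Y := Nat.div_add_mod Y s
    have hrs : r < s := Nat.mod_lt _ hs
    have hqX : q ≤ X := by
      have h := Nat.div_le_div_right (c := s) hY
      rw [Nat.mul_div_cancel_left _ hs] at h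
      exact h
    rcases Nat.eq_zero_or_pos r with hr0 | hr0
    · -- r = 0
      obtain ⟨e, he⟩ := Nat.exists_eq_add_of_le hqX
      refine ⟨fun i => (if (i : ℕ) = 0 then e else 0) + (if (i : ℕ) = s then q else 0), ?_⟩
      have hsum : ∑ i : Fin (s + 1), (a + (i : ℕ) * d) *
            ((if (i : ℕ) = 0 then e else 0) + (if (i : ℕ) = s then q else 0))
          = (a + 0 * d) * e + (a + s * d) * q := by
        simp only [Nat.mul_add, Finset.sum_add_distrib]
        rw [fin_sum_single a d s 0 e (Nat.zero_le s), fin_sum_single a d s s q le_rfl]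
      rw [hsum, he]
      have : Y = s * q := by omega
      rw [this]
      ring
    · -- r > 0
      have hqX' : q + 1 ≤ X := by
        have h1 : s * q < s * X := by omega
        have := Nat.lt_of_mul_lt_mul_left h1
        omega
      obtain ⟨e, he⟩ := Nat.exists_eq_add_of_le hqX'
      refine ⟨fun i => (if (i : ℕ) = 0 then e else 0) + (if (i : ℕ) = r then 1 else 0)
        + (if (i : ℕ) = s then q else 0), ?_⟩
      have hsum : ∑ i : Fin (s + 1), (a + (i : ℕ) * d) *
            ((if (i : ℕ) = 0 then e else 0) + (if (i : ℕ) = r then 1 else 0)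
              + (if (i : ℕ) = s then q else 0))
          = (a + 0 * d) * e + (a + r * d) * 1 + (a + s * d) * q := by
        simp only [Nat.mul_add, Finset.sum_add_distrib]
        rw [fin_sum_single a d s 0 e (Nat.zero_le s), fin_sum_single a d s r 1 hrs.le,
          fin_sum_single a d s s q le_rfl]
      rw [hsum, he]
      have : Y = s * q + r := by omega
      rw [this]
      ring

lemma syl_rep_w (a d s n k : ℕ) (hs : 1 ≤ s) : SylRep a d s (sylW a d s n + a * k) := by
  refine ⟨sylC s n + k, n, ?_, ?_⟩
  · calc n ≤ s * sylC s n := le_mul_sylC hs n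
      _ ≤ s * (sylC s n + k) := Nat.mul_le_mul_left _ (Nat.le_add_right _ _)
  · unfold sylW; ring

lemma syl_rep_mod (a d s n t : ℕ) (had : Nat.Coprime a d) (hs : 1 ≤ s) (hn : n < a)
    (h : SylRep a d s t) (ht : t ≡ n * d [MOD a]) : ∃ k, t = sylW a d s n + a * k := by
  obtain ⟨X, Y, hY, rfl⟩ := h
  have h1 : d * Y ≡ d * n [MOD a] := by
    calc d * Y ≡ a * X + d * Y [MOD a] := (Nat.modEq_iff_dvd' (Nat.le_add_left _ _)).mpr
            ⟨X, by omega⟩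
      _ ≡ n * d [MOD a] := ht
      _ = d * n := mul_comm _ _
  have h2 : Y ≡ n [MOD a] := Nat.ModEq.cancel_left_of_coprime had h1
  have hnY : n ≤ Y := by
    have := h2.symm
    unfold Nat.ModEq at this
    rw [Nat.mod_eq_of_lt hn] at this
    exact this ▸ Nat.mod_le Y a
  obtain ⟨c, hc⟩ := (Nat.modEq_iff_dvd' hnY).mp h2.symm
  have hYe : Y = n + a * c := by omega
  have hcX : sylC s n ≤ X := sylC_le_of hs (le_trans (hYe ▸ Nat.le_add_right n (a*c)) hY)
  obtain ⟨e, he⟩ := Nat.exists_eq_add_of_le hcX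
  refine ⟨e + d * c, ?_⟩
  unfold sylW
  rw [he, hYe]
  ring



lemma syl_tele (m : ℕ) (x : ℚ) (K : ℕ) :
    (Polynomial.bernoulli m).eval (x + K) =
      (Polynomial.bernoulli m).eval x + m * ∑ k ∈ range K, (x + k) ^ (m - 1) := by
  induction K with
  | zero => simp
  | succ K ih =>
    have h : x + ((K : ℕ) + 1 : ℚ) = 1 + (x + K) := by ring
    push_cast
    rw [show x + ((K : ℚ) + 1) = 1 + (x + K) by ring, Polynomial.bernoulli_eval_one_add, ih,
      sum_range_succ]
    push_cast
    ring

lemma syl_eval_bernoulli (m : ℕ) (x : ℚ) :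
    (Polynomial.bernoulli m).eval x =
      ∑ i ∈ range (m + 1), _root_.bernoulli i * (m.choose i) * x ^ (m - i) := by
  rw [Polynomial.bernoulli, eval_finset_sum]
  simp [eval_monomial]

lemma syl_mult (a : ℕ) (ha : 0 < a) : ∀ m : ℕ,
    (a : ℚ) ^ m * ∑ r ∈ range a, (Polynomial.bernoulli m).eval ((r : ℚ) / a) =
      a * _root_.bernoulli m := by
  intro m
  induction m using Nat.strong_induction_on with
  | _ m ih =>
    have ha' : (a : ℚ) ≠ 0 := by positivity
    have h1 : ∀ r : ℚ, ∑ i ∈ range (m + 1), ((m + 1).choose i : ℚ) *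
        (Polynomial.bernoulli i).eval r = (m + 1 : ℚ) * r ^ m := by
      intro r
      have := congrArg (Polynomial.eval r) (Polynomial.sum_bernoulli m)
      simp only [eval_finset_sum, eval_smul, smul_eq_mul, eval_monomial] at this
      rw [this]
    have key : ∑ i ∈ range (m + 1), ((m + 1).choose i : ℚ) *
          ((a:ℚ)^m * ∑ r ∈ range a, (Polynomial.bernoulli i).eval ((r : ℚ) / a)) =
        (m + 1 : ℚ) * ∑ r ∈ range a, (r : ℚ) ^ m := by
      calc ∑ i ∈ range (m + 1), ((m + 1).choose i : ℚ) *
            ((a:ℚ)^m * ∑ r ∈ range a, (Polynomial.bernoulli i).eval ((r : ℚ) / a))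
          = ∑ r ∈ range a, (a:ℚ)^m * ∑ i ∈ range (m + 1), ((m + 1).choose i : ℚ) *
            (Polynomial.bernoulli i).eval ((r : ℚ) / a) := by
            simp only [Finset.mul_sum]
            rw [Finset.sum_comm]
            exact Finset.sum_congr rfl fun r _ => Finset.sum_congr rfl fun i _ => by ring
        _ = ∑ r ∈ range a, (a:ℚ)^m * ((m + 1 : ℚ) * ((r : ℚ)/a) ^ m) := by
            exact Finset.sum_congr rfl fun r _ => by rw [h1]
        _ = (m + 1 : ℚ) * ∑ r ∈ range a, (r : ℚ) ^ m := by
            rw [Finset.mul_sum]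
            refine Finset.sum_congr rfl fun r _ => ?_
            rw [div_pow]
            field_simp
    have h2 : (m + 1 : ℚ) * ∑ r ∈ range a, (r : ℚ) ^ m =
        ∑ i ∈ range (m + 1), _root_.bernoulli i * ((m+1).choose i) * (a:ℚ) ^ (m + 1 - i) := by
      have h3 := Polynomial.bernoulli_succ_eval a m
      have h4 := syl_eval_bernoulli (m + 1) (a : ℚ)
      rw [Nat.succ_eq_add_one] at h3
      rw [h3, sum_range_succ] at h4
      simp only [Nat.sub_self, pow_zero, Nat.choose_self, Nat.cast_one, mul_one] at h4
      linarith [h4]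
    have h5 : ∀ i ∈ range m, ((m + 1).choose i : ℚ) *
          ((a:ℚ)^m * ∑ r ∈ range a, (Polynomial.bernoulli i).eval ((r : ℚ) / a)) =
        _root_.bernoulli i * ((m+1).choose i) * (a:ℚ) ^ (m + 1 - i) := by
      intro i hi
      rw [mem_range] at hi
      have hIH := ih i hi
      have heq : (a:ℚ)^m * ∑ r ∈ range a, (Polynomial.bernoulli i).eval ((r : ℚ) / a)
          = (a:ℚ)^(m - i) * ((a:ℚ)^i * ∑ r ∈ range a, (Polynomial.bernoulli i).eval ((r : ℚ) / a)) := by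
        rw [← mul_assoc, ← pow_add]
        congr 2
        omega
      rw [heq, hIH, show m + 1 - i = (m - i) + 1 from by omega, pow_succ]
      ring
    rw [sum_range_succ] at key h2
    rw [Finset.sum_congr rfl h5] at key
    rw [show m + 1 - m = 1 from by omega, pow_one] at h2
    have hcm : ((m + 1).choose m : ℚ) = (m : ℚ) + 1 := by
      rw [Nat.choose_succ_self_right]; push_cast; ring
    rw [hcm] at key h2
    have hm1 : ((m : ℚ) + 1) ≠ 0 := by positivity
    have : ((m:ℚ)+1) * ((a:ℚ)^m * ∑ r ∈ range a, (Polynomial.bernoulli m).eval ((r : ℚ) / a))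
        = ((m:ℚ)+1) * ((a:ℚ) * _root_.bernoulli m) := by
      have := key.trans h2
      linarith [this]
    exact mul_left_cancel₀ hm1 this

open Polynomial in
lemma syl_ceil_cast {s : ℕ} (hs : 0 < s) (n : ℕ) :
    (⌈(n : ℚ) / (s : ℚ)⌉ : ℚ) = (sylC s n : ℚ) := by
  have hsQ : (0:ℚ) < s := by exact_mod_cast hs
  have h1 : (n : ℚ) / s ≤ (sylC s n : ℚ) := by
    rw [div_le_iff₀ hsQ]
    have := le_mul_sylC hs n
    have : (n:ℚ) ≤ (s:ℚ) * (sylC s n : ℚ) := by exact_mod_cast this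
    linarith
  have h2 : ((sylC s n : ℚ)) - 1 < (n : ℚ) / s := by
    rw [lt_div_iff₀ hsQ]
    have h3 : s * sylC s n < n + s := by
      have := mul_sylC_le hs n
      omega
    have h4 : (s:ℚ) * (sylC s n : ℚ) < (n:ℚ) + s := by exact_mod_cast h3
    nlinarith
  have : ⌈(n : ℚ) / (s : ℚ)⌉ = (sylC s n : ℤ) := by
    rw [Int.ceil_eq_iff]
    constructor
    · push_cast; exact h2
    · push_cast; exact h1
  rw [this]
  push_cast
  ring

end SylAux

theorem sylvester_sum_arithmetic_progression
    (a d s : ℕ) (ha : 2 ≤ a) (hd : 1 ≤ d) (hs : 1 ≤ s) (hsa : s < a)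
    (had : Nat.Coprime a d)
    (NR : Finset ℕ)
    (hNR : ∀ n : ℕ, n ∈ NR ↔ 0 < n ∧
      ¬ ∃ x : Fin (s + 1) → ℕ, n = ∑ i : Fin (s + 1), (a + (i : ℕ) * d) * x i)
    (m : ℕ) (hm : 1 ≤ m) :
    (m : ℚ) * ∑ n ∈ NR, (n : ℚ) ^ (m - 1) =
      (a : ℚ) ^ (m - 1) *
        ∑ n ∈ Finset.range a,
          (Polynomial.bernoulli m).eval
            ((⌈(n : ℚ) / (s : ℚ)⌉ : ℚ) + (n : ℚ) * (d : ℚ) / (a : ℚ))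
      - bernoulli m := by
  have ha0 : 0 < a := by omega
  have haQ : (a : ℚ) ≠ 0 := by positivity
  obtain ⟨e, -, he⟩ := Nat.exists_mul_mod_eq_one_of_coprime had.symm (by omega : 1 < a)
  have hde : d * e ≡ 1 [MOD a] := by
    unfold Nat.ModEq
    rw [he, Nat.mod_eq_of_lt ha]
  -- w n % a = n * d % a
  have hwmod : ∀ n, sylW a d s n % a = n * d % a := by
    intro n
    unfold sylW
    exact Nat.mul_add_mod a _ _
  -- membership characterization
  have hmem : ∀ t : ℕ, t ∈ NR ↔ ∃ n < a, ∃ k < sylW a d s n / a, t = sylW a d s n - a * (k + 1) := by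
    intro t
    rw [hNR t]
    constructor
    · rintro ⟨htpos, hnr⟩
      rw [syl_rep_iff a d s t hs] at hnr
      set n := t * e % a with hn
      have hna : n < a := Nat.mod_lt _ ha0
      have htn : t ≡ n * d [MOD a] := by
        have h1 : n ≡ t * e [MOD a] := Nat.mod_modEq _ _
        calc t = t * 1 := by ring
          _ ≡ t * (d * e) [MOD a] := (Nat.ModEq.mul_left t hde).symm
          _ = (t * e) * d := by ring
          _ ≡ n * d [MOD a] := Nat.ModEq.mul_right d h1.symm
      have htw : t < sylW a d s n := by
        by_contra hge
        push_neg at hge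
        have hmod : t % a = sylW a d s n % a := by rw [hwmod]; exact htn
        have hdvd : a ∣ t - sylW a d s n := by
          rw [← Nat.modEq_iff_dvd' hge]
          exact hmod.symm
        obtain ⟨k, hk⟩ := hdvd
        refine hnr ?_
        rw [(by omega : t = sylW a d s n + a * k)]
        exact syl_rep_w a d s n k hs
      -- t ≡ w n [MOD a], t < w n
      have hmod : sylW a d s n % a = t % a := by rw [hwmod]; exact htn.symm
      have hdvd : a ∣ sylW a d s n - t := by
        rw [← Nat.modEq_iff_dvd' htw.le]
        exact hmod.symm
      obtain ⟨j, hj⟩ := hdvd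
      have hj1 : 1 ≤ j := by
        rcases Nat.eq_zero_or_pos j with rfl | h1
        · omega
        · exact h1
      refine ⟨n, hna, j - 1, ?_, ?_⟩
      · have h6 : (j - 1 + 1) * a ≤ sylW a d s n := by
          have : (j - 1 + 1) * a = a * j := by rw [mul_comm]; congr 1; omega
          omega
        have := (Nat.le_div_iff_mul_le ha0).mpr h6
        omega
      · have : a * (j - 1 + 1) = a * j := by congr 1; omega
        omega
    · rintro ⟨n, hna, k, hk, rfl⟩
      have hk1 : (k + 1) * a ≤ sylW a d s n := by
        rw [← Nat.le_div_iff_mul_le ha0]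
        omega
      have hak : a * (k + 1) ≤ sylW a d s n := by rw [mul_comm]; exact hk1
      have hwa : ¬ a ∣ sylW a d s n := by
        intro hdvd
        have : a ∣ n * d := by
          have h1 : a ∣ a * sylC s n := Dvd.intro _ rfl
          have := (Nat.dvd_sub hdvd h1)
          unfold sylW at this
          simpa using this
        have han : a ∣ n := (Nat.Coprime.dvd_of_dvd_mul_right had) this
        rcases Nat.eq_zero_of_dvd_of_lt han hna with h0
        · subst h0
          have hc0 : sylC s 0 = 0 := by unfold sylC; simp [Nat.div_eq_of_lt (by omega : s - 1 < s)]
          unfold sylW at hak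
          rw [hc0] at hak
          simp at hak
          omega
      have htpos : 0 < sylW a d s n - a * (k + 1) := by
        rcases Nat.lt_or_ge (a * (k + 1)) (sylW a d s n) with h | h
        · omega
        · exfalso
          have : a * (k + 1) = sylW a d s n := le_antisymm hak h
          exact hwa ⟨k + 1, this.symm⟩
      refine ⟨htpos, ?_⟩
      rw [syl_rep_iff a d s _ hs]
      intro hrep
      have htn : sylW a d s n - a * (k+1) ≡ n * d [MOD a] := by
        have h1 : (sylW a d s n - a * (k+1)) % a = sylW a d s n % a := by
          have h2 : sylW a d s n - a * (k+1) + (k+1) * a = sylW a d s n := by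
            rw [mul_comm] at hak ⊢
            omega
          calc (sylW a d s n - a * (k+1)) % a
              = (sylW a d s n - a * (k+1) + (k+1) * a) % a := (Nat.add_mul_mod_self_right _ _ _).symm
            _ = sylW a d s n % a := by rw [h2]
        unfold Nat.ModEq
        rw [h1, hwmod]
      obtain ⟨k', hk'⟩ := syl_rep_mod a d s n _ had hs hna hrep htn
      have h7 : a ≤ a * (k + 1) := Nat.le_mul_of_pos_right _ (by omega)
      omega
  -- NR as a biUnion of images
  have hNReq : NR = (Finset.range a).biUnion
      (fun n => (Finset.range (sylW a d s n / a)).image (fun k => sylW a d s n - a * (k + 1))) := by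
    ext t
    rw [hmem t]
    simp only [Finset.mem_biUnion, Finset.mem_image, Finset.mem_range]
    constructor
    · rintro ⟨n, hna, k, hk, rfl⟩; exact ⟨n, hna, k, hk, rfl⟩
    · rintro ⟨n, hna, k, hk, rfl⟩; exact ⟨n, hna, k, hk, rfl⟩
  -- residue of the elements in a block
  have hval : ∀ n, ∀ k < sylW a d s n / a, (sylW a d s n - a * (k + 1)) % a = n * d % a := by
    intro n k hk
    have hak : a * (k + 1) ≤ sylW a d s n := by
      have := (Nat.le_div_iff_mul_le ha0).mp (by omega : k + 1 ≤ sylW a d s n / a)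
      rw [mul_comm] at this
      exact this
    have h2 : sylW a d s n - a * (k + 1) + (k + 1) * a = sylW a d s n := by
      rw [mul_comm] at hak ⊢
      omega
    calc (sylW a d s n - a * (k + 1)) % a
        = (sylW a d s n - a * (k + 1) + (k + 1) * a) % a := (Nat.add_mul_mod_self_right _ _ _).symm
      _ = sylW a d s n % a := by rw [h2]
      _ = n * d % a := hwmod n
  have hres : ∀ n1 < a, ∀ n2 < a, n1 * d % a = n2 * d % a → n1 = n2 := by
    intro n1 h1 n2 h2 h
    have h3 : n1 ≡ n2 [MOD a] := Nat.ModEq.cancel_right_of_coprime had h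
    unfold Nat.ModEq at h3
    rwa [Nat.mod_eq_of_lt h1, Nat.mod_eq_of_lt h2] at h3
  have hdisj : (↑(Finset.range a) : Set ℕ).PairwiseDisjoint
      (fun n => (Finset.range (sylW a d s n / a)).image (fun k => sylW a d s n - a * (k + 1))) := by
    intro n1 h1 n2 h2 hne
    rw [Finset.mem_coe, Finset.mem_range] at h1 h2
    rw [Function.onFun, Finset.disjoint_left]
    intro t ht1 ht2
    simp only [Finset.mem_image, Finset.mem_range] at ht1 ht2
    obtain ⟨k1, hk1, rfl⟩ := ht1
    obtain ⟨k2, hk2, he2⟩ := ht2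
    exact hne (hres n1 h1 n2 h2 (by rw [← hval n1 k1 hk1, ← hval n2 k2 hk2, he2]))
  have hsum1 : ∑ t ∈ NR, (t : ℚ) ^ (m - 1) =
      ∑ n ∈ Finset.range a, ∑ k ∈ Finset.range (sylW a d s n / a),
        ((sylW a d s n - a * (k + 1) : ℕ) : ℚ) ^ (m - 1) := by
    rw [hNReq, Finset.sum_biUnion hdisj]
    refine Finset.sum_congr rfl fun n _ => ?_
    rw [Finset.sum_image ?_]
    intro k1 h1 k2 h2 heq
    rw [Finset.mem_coe, Finset.mem_range] at h1 h2
    have b1 : a * (k1 + 1) ≤ sylW a d s n := by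
      have := (Nat.le_div_iff_mul_le ha0).mp (by omega : k1 + 1 ≤ sylW a d s n / a)
      rw [mul_comm] at this; exact this
    have b2 : a * (k2 + 1) ≤ sylW a d s n := by
      have := (Nat.le_div_iff_mul_le ha0).mp (by omega : k2 + 1 ≤ sylW a d s n / a)
      rw [mul_comm] at this; exact this
    have : a * (k1 + 1) = a * (k2 + 1) := by simp only at heq; omega
    have := Nat.eq_of_mul_eq_mul_left ha0 this
    omega
  have hinner : ∀ n ∈ Finset.range a,
      (m : ℚ) * ∑ k ∈ Finset.range (sylW a d s n / a),
          ((sylW a d s n - a * (k + 1) : ℕ) : ℚ) ^ (m - 1) =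
      (a : ℚ) ^ (m - 1) *
        ((Polynomial.bernoulli m).eval
            (((sylW a d s n % a : ℕ) : ℚ) / a + ((sylW a d s n / a : ℕ) : ℚ))
          - (Polynomial.bernoulli m).eval (((sylW a d s n % a : ℕ) : ℚ) / a)) := by
    intro n _
    have hdm : a * (sylW a d s n / a) + sylW a d s n % a = sylW a d s n :=
      Nat.div_add_mod (sylW a d s n) a
    have hstep : ∀ k ∈ Finset.range (sylW a d s n / a),
        ((sylW a d s n - a * (k + 1) : ℕ) : ℚ) ^ (m - 1) =
        ((sylW a d s n % a + a * (sylW a d s n / a - 1 - k) : ℕ) : ℚ) ^ (m - 1) := by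
      intro k hk
      rw [Finset.mem_range] at hk
      have h1 : (sylW a d s n / a - 1 - k) + (k + 1) = sylW a d s n / a := by omega
      have h2 : a * (sylW a d s n / a - 1 - k) + a * (k + 1) = a * (sylW a d s n / a) := by
        rw [← Nat.mul_add, h1]
      congr 2
      omega
    have hrefl : ∑ k ∈ Finset.range (sylW a d s n / a),
          ((sylW a d s n % a + a * (sylW a d s n / a - 1 - k) : ℕ) : ℚ) ^ (m - 1) =
        ∑ j ∈ Finset.range (sylW a d s n / a),
          ((sylW a d s n % a + a * j : ℕ) : ℚ) ^ (m - 1) :=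
      Finset.sum_range_reflect (fun j => ((sylW a d s n % a + a * j : ℕ) : ℚ) ^ (m - 1)) _
    rw [Finset.sum_congr rfl hstep, hrefl]
    have hcast : ∀ j : ℕ, ((sylW a d s n % a + a * j : ℕ) : ℚ) ^ (m - 1) =
        (a : ℚ) ^ (m - 1) * (((sylW a d s n % a : ℕ) : ℚ) / a + (j : ℚ)) ^ (m - 1) := by
      intro j
      rw [← mul_pow]
      congr 1
      push_cast
      field_simp
    rw [Finset.sum_congr rfl fun j _ => hcast j, ← Finset.mul_sum]
    have htel := syl_tele m (((sylW a d s n % a : ℕ) : ℚ) / a) (sylW a d s n / a)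
    rw [htel]
    ring
  have harg : ∀ n : ℕ, ((sylW a d s n % a : ℕ) : ℚ) / a + ((sylW a d s n / a : ℕ) : ℚ)
      = (⌈(n : ℚ) / (s : ℚ)⌉ : ℚ) + (n : ℚ) * (d : ℚ) / (a : ℚ) := by
    intro n
    rw [syl_ceil_cast hs n]
    have h1 : ((sylW a d s n % a : ℕ) : ℚ) + (a : ℚ) * ((sylW a d s n / a : ℕ) : ℚ)
        = (sylW a d s n : ℚ) := by
      exact_mod_cast congrArg (Nat.cast : ℕ → ℚ) (Nat.mod_add_div (sylW a d s n) a)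
    have h2 : (sylW a d s n : ℚ) = a * (sylC s n : ℚ) + n * d := by
      unfold sylW; push_cast; ring
    have haQ2 : (a : ℚ) ≠ 0 := haQ
    field_simp
    linarith [h1, h2]
  have hperm : ∑ n ∈ Finset.range a, (Polynomial.bernoulli m).eval (((n * d % a : ℕ) : ℚ) / a)
      = ∑ r ∈ Finset.range a, (Polynomial.bernoulli m).eval ((r : ℚ) / a) := by
    refine Finset.sum_nbij' (fun n => n * d % a) (fun r => r * e % a) ?_ ?_ ?_ ?_ ?_
    · intro n _; exact Finset.mem_range.mpr (Nat.mod_lt _ ha0)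
    · intro r _; exact Finset.mem_range.mpr (Nat.mod_lt _ ha0)
    · intro n hn
      rw [Finset.mem_range] at hn
      have h2 : (n * d % a) * e ≡ n [MOD a] := by
        calc (n * d % a) * e ≡ (n * d) * e [MOD a] := Nat.ModEq.mul_right e (Nat.mod_modEq _ _)
          _ = n * (d * e) := by ring
          _ ≡ n * 1 [MOD a] := Nat.ModEq.mul_left n hde
          _ = n := by ring
      unfold Nat.ModEq at h2
      rwa [Nat.mod_eq_of_lt hn] at h2
    · intro r hr
      rw [Finset.mem_range] at hr
      have h2 : (r * e % a) * d ≡ r [MOD a] := by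
        calc (r * e % a) * d ≡ (r * e) * d [MOD a] := Nat.ModEq.mul_right d (Nat.mod_modEq _ _)
          _ = r * (d * e) := by ring
          _ ≡ r * 1 [MOD a] := Nat.ModEq.mul_left r hde
          _ = r := by ring
      unfold Nat.ModEq at h2
      rwa [Nat.mod_eq_of_lt hr] at h2
    · intro n _; rfl
  have hfin : (a : ℚ) ^ (m - 1) * ∑ r ∈ Finset.range a,
      (Polynomial.bernoulli m).eval ((r : ℚ) / a) = _root_.bernoulli m := by
    have hmult := syl_mult a ha0 m
    have hpow : (a : ℚ) ^ m = (a : ℚ) * (a : ℚ) ^ (m - 1) := by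
      rw [← pow_succ']
      congr 1
      omega
    rw [hpow, mul_assoc] at hmult
    exact mul_left_cancel₀ haQ hmult
  calc (m : ℚ) * ∑ t ∈ NR, (t : ℚ) ^ (m - 1)
      = ∑ n ∈ Finset.range a, (m : ℚ) * ∑ k ∈ Finset.range (sylW a d s n / a),
          ((sylW a d s n - a * (k + 1) : ℕ) : ℚ) ^ (m - 1) := by
        rw [hsum1, Finset.mul_sum]
    _ = ∑ n ∈ Finset.range a, (a : ℚ) ^ (m - 1) *
          ((Polynomial.bernoulli m).eval
              ((⌈(n : ℚ) / (s : ℚ)⌉ : ℚ) + (n : ℚ) * (d : ℚ) / (a : ℚ))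
            - (Polynomial.bernoulli m).eval (((n * d % a : ℕ) : ℚ) / a)) := by
        refine Finset.sum_congr rfl fun n hn => ?_
        rw [hinner n hn, harg n, hwmod n]
    _ = (a : ℚ) ^ (m - 1) * ∑ n ∈ Finset.range a, (Polynomial.bernoulli m).eval
              ((⌈(n : ℚ) / (s : ℚ)⌉ : ℚ) + (n : ℚ) * (d : ℚ) / (a : ℚ))
          - (a : ℚ) ^ (m - 1) * ∑ n ∈ Finset.range a,
              (Polynomial.bernoulli m).eval (((n * d % a : ℕ) : ℚ) / a) := by
        simp only [mul_sub]
        rw [Finset.sum_sub_distrib, ← Finset.mul_sum, ← Finset.mul_sum]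
    _ = (a : ℚ) ^ (m - 1) * ∑ n ∈ Finset.range a, (Polynomial.bernoulli m).eval
              ((⌈(n : ℚ) / (s : ℚ)⌉ : ℚ) + (n : ℚ) * (d : ℚ) / (a : ℚ))
          - _root_.bernoulli m := by
        rw [hperm, hfin]
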